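/- In ℤQ with Q finite and acyclic, if a presection Σ satisfies that the vertex y lies in Σ and there exists a path x₀ → x₁ → ⋯ → x_t = y with x₀ ∈ Σ and x₁, …, x_{t−1} ∉ Σ (t ≥ 2), then one of τy, τ²y, …, τᵗy lies in Σ. -/
import Mathlib


/- STATEMENT 7: In ℤQ with Q finite acyclic, if Σ is a presection, y ∈ Σ, and there
   is a path x₀ → x₁ → ⋯ → x_t = y with x₀ ∈ Σ and x₁, …, x_{t-1} ∉ Σ (t ≥ 2), then
   one of τy, τ²y, …, τᵗy lies in Σ. -/

namespace Stmt7

variable {Q0 : Type*}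

def ZArrow (QArrow : Q0 → Q0 → Prop) : ℤ × Q0 → ℤ × Q0 → Prop :=
  fun x y => (y.1 = x.1 ∧ QArrow x.2 y.2) ∨ (y.1 = x.1 + 1 ∧ QArrow y.2 x.2)

def tauZQ (Q0 : Type*) : Equiv.Perm (ℤ × Q0) :=
  ⟨fun x => (x.1 - 1, x.2), fun x => (x.1 + 1, x.2),
    fun x => by simp, fun x => by simp⟩

lemma tau_arrow (QArrow : Q0 → Q0 → Prop) {x y : ℤ × Q0} (h : ZArrow QArrow x y) :
    ZArrow QArrow (tauZQ Q0 x) (tauZQ Q0 y) := by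
  rcases h with ⟨h1, h2⟩ | ⟨h1, h2⟩
  · exact Or.inl ⟨by simp [tauZQ, h1], h2⟩
  · exact Or.inr ⟨by simp [tauZQ, h1], h2⟩

lemma tau_pow_arrow (QArrow : Q0 → Q0 → Prop) (k : ℕ) {x y : ℤ × Q0}
    (h : ZArrow QArrow x y) : ZArrow QArrow ((tauZQ Q0 ^ k) x) ((tauZQ Q0 ^ k) y) := by
  induction k with
  | zero => simpa using h
  | succ n ih =>
    rw [pow_succ', Equiv.Perm.mul_apply, Equiv.Perm.mul_apply]
    exact tau_arrow QArrow ih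

theorem presection_translate_on_path
    [Fintype Q0] (QArrow : Q0 → Q0 → Prop)
    -- Q is acyclic
    (hQacyc : ∀ (p : ℕ → Q0) (t : ℕ), 0 < t → (∀ i < t, QArrow (p i) (p (i + 1))) →
      p 0 ≠ p t)
    (S : Set (ℤ × Q0))
    -- Σ is a connected full subquiver of ℤQ
    (hSconn : ∀ x ∈ S, ∀ y ∈ S, Relation.ReflTransGen
      (fun a b => a ∈ S ∧ b ∈ S ∧ (ZArrow QArrow a b ∨ ZArrow QArrow b a)) x y)
    -- Σ is a presection
    (hP1 : ∀ x y, ZArrow QArrow x y → x ∈ S → y ∈ S ∨ tauZQ Q0 y ∈ S)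
    (hP2 : ∀ x y, ZArrow QArrow x y → y ∈ S → x ∈ S ∨ (tauZQ Q0).symm x ∈ S)
    -- a path x₀ → x₁ → ⋯ → x_t = y with t ≥ 2, x₀ ∈ Σ and x₁, …, x_{t-1} ∉ Σ
    (p : ℕ → ℤ × Q0) (t : ℕ) (ht : 2 ≤ t)
    (hpath : ∀ i < t, ZArrow QArrow (p i) (p (i + 1)))
    (hstart : p 0 ∈ S) (hmid : ∀ i, 0 < i → i < t → p i ∉ S)
    (y : ℤ × Q0) (hy : p t = y) (hyS : y ∈ S) :
    -- conclusion: one of τy, τ²y, …, τᵗy lies in Σ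
    ∃ k, 1 ≤ k ∧ k ≤ t ∧ (tauZQ Q0 ^ k) y ∈ S := by
  -- key claim: for all 1 ≤ i ≤ t, some τ^k p i ∈ S with 1 ≤ k ≤ i
  have key : ∀ i, 1 ≤ i → i ≤ t → ∃ k, 1 ≤ k ∧ k ≤ i ∧ (tauZQ Q0 ^ k) (p i) ∈ S := by
    intro i
    induction i with
    | zero => omega
    | succ n ih =>
      intro _ hn
      rcases Nat.eq_zero_or_pos n with rfl | hnpos
      · -- base case: i = 1
        rcases hP1 (p 0) (p 1) (hpath 0 (by omega)) hstart with h | h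
        · exact absurd h (hmid 1 one_pos (by omega))
        · exact ⟨1, le_refl 1, le_refl 1, by simpa using h⟩
      · obtain ⟨k, hk1, hk2, hkS⟩ := ih hnpos (by omega)
        have harr := tau_pow_arrow QArrow k (hpath n (by omega))
        rcases hP1 _ _ harr hkS with h | h
        · exact ⟨k, hk1, by omega, h⟩
        · refine ⟨k + 1, by omega, by omega, ?_⟩
          rw [pow_succ', Equiv.Perm.mul_apply]
          exact h
  obtain ⟨k, hk1, hk2, hkS⟩ := key t (by omega) le_rfl
  exact ⟨k, hk1, hk2, hy ▸ hkS⟩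

end Stmt7
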